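/- Let G be a finite simple graph with vertex set [n] = {1,…,n}, let k ≤ n, and let 𝔽 be the finite field with 2^{k+2} elements. Then there exists a matrix A' ∈ 𝔽^{n×n} such that for every S ⊆ {1,…,k}: the graph G − S has a perfect matching if and only if the determinant of the principal submatrix of A' whose rows and columns are indexed by [n] ∖ S is nonzero. -/

import Mathlib

open Finset Equiv MvPolynomial

section Aux

lemma det_eq_sum_involutions {R : Type*} [CommRing R] {V : Type*} [Fintype V] [DecidableEq V]
    (h2 : (2 : R) = 0) (A : Matrix V V R) (hsym : ∀ i j, A i j = A j i) :
    A.det = ∑ σ ∈ univ.filter (fun σ : Perm V => σ * σ = 1), ∏ i, A i (σ i) := by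
  have hadd : ∀ r : R, r + r = 0 := fun r => by
    calc r + r = 2 * r := (two_mul r).symm
    _ = 0 := by rw [h2, zero_mul]
  have hneg : ∀ r : R, -r = r := fun r => neg_eq_of_add_eq_zero_left (hadd r)
  have hprod : ∀ σ : Perm V, (∏ i, A i (σ⁻¹ i)) = ∏ i, A i (σ i) := by
    intro σ
    calc (∏ i, A i (σ⁻¹ i)) = ∏ i, A (σ i) (σ⁻¹ (σ i)) := (Equiv.prod_comp σ _).symm
    _ = ∏ i, A i (σ i) := by
        refine Finset.prod_congr rfl fun i _ => ?_
        rw [show σ⁻¹ (σ i) = i from σ.symm_apply_apply i, hsym]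
  have hdet : A.det = ∑ σ : Perm V, ∏ i, A i (σ i) := by
    rw [Matrix.det_apply]
    refine Finset.sum_congr rfl fun σ _ => ?_
    have : (∏ i, A (σ i) i) = ∏ i, A i (σ i) :=
      Finset.prod_congr rfl fun i _ => hsym _ _
    rw [this]
    rcases Int.units_eq_one_or (Perm.sign σ) with h | h
    · rw [h, one_smul]
    · rw [h, Units.smul_def, Units.val_neg, Units.val_one, neg_smul, one_smul, hneg]
  rw [hdet, ← Finset.sum_filter_add_sum_filter_not univ (fun σ : Perm V => σ * σ = 1)
    (fun σ => ∏ i, A i (σ i))]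
  have hzero : ∑ σ ∈ univ.filter (fun σ : Perm V => ¬ σ * σ = 1), ∏ i, A i (σ i) = 0 := by
    refine Finset.sum_involution (fun σ _ => σ⁻¹) ?_ ?_ ?_ ?_
    · intro σ hσ
      rw [hprod σ, hadd]
    · intro σ hσ hne
      simp only [mem_filter] at hσ
      intro h
      apply hσ.2
      have h' : σ⁻¹ = σ := h
      calc σ * σ = σ * σ⁻¹ := by rw [h']
      _ = 1 := mul_inv_cancel σ
    · intro σ hσ
      simp only [mem_filter, mem_univ, true_and] at hσ ⊢
      intro h
      apply hσ
      have h' : (σ * σ)⁻¹ = 1 := by rw [mul_inv_rev]; exact h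
      rwa [inv_eq_one] at h'
    · intro σ _; simp
  rw [hzero, add_zero]

lemma prod_X_eq_monomial' {σ R : Type*} [CommSemiring R] {ι : Type*} (t : Finset ι) (e : ι → σ) :
    (∏ v ∈ t, X (e v) : MvPolynomial σ R) =
      monomial (∑ v ∈ t, Finsupp.single (e v) 1) 1 := by
  classical
  induction t using Finset.cons_induction with
  | empty => simp
  | cons a t ha ih =>
      rw [Finset.prod_cons, Finset.sum_cons, ih, X, monomial_mul, one_mul]

lemma degreeOf_prod_le' {σ R ι : Type*} [CommSemiring R] (i : σ) (t : Finset ι)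
    (f : ι → MvPolynomial σ R) :
    degreeOf i (∏ s ∈ t, f s) ≤ ∑ s ∈ t, degreeOf i (f s) := by
  classical
  induction t using Finset.cons_induction with
  | empty =>
      rw [Finset.prod_empty, Finset.sum_empty, ← C_1, degreeOf_C]
  | cons a t ha ih =>
      rw [Finset.prod_cons, Finset.sum_cons]
      exact (MvPolynomial.degreeOf_mul_le _ _ _).trans (Nat.add_le_add le_rfl ih)

end Aux

/-- A graph has a perfect matching if some subgraph of it is a perfect matching. -/
def HasPerfectMatching {V : Type} (G : SimpleGraph V) : Prop :=
  ∃ M : G.Subgraph, M.IsPerfectMatching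

lemma hasPM_iff_involution {V : Type} [DecidableEq V] (G : SimpleGraph V) (s : Set V) :
    HasPerfectMatching (G.induce s) ↔
      ∃ τ : Perm ↥s, τ * τ = 1 ∧ ∀ v : ↥s, G.Adj ↑v ↑(τ v) := by
  constructor
  · rintro ⟨M, hM⟩
    rw [SimpleGraph.Subgraph.isPerfectMatching_iff] at hM
    have hadj : ∀ v : ↥s, M.Adj v (Classical.choose (ExistsUnique.exists (hM v))) := fun v =>
      Classical.choose_spec (ExistsUnique.exists (hM v))
    set f : ↥s → ↥s := fun v => Classical.choose (ExistsUnique.exists (hM v)) with hf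
    have hinv : Function.Involutive f := by
      intro v
      have h1 : M.Adj (f v) (f (f v)) := hadj (f v)
      have h2 : M.Adj (f v) v := (hadj v).symm
      exact (ExistsUnique.unique (hM (f v)) h1 h2)
    refine ⟨hinv.toPerm, ?_, ?_⟩
    · ext v
      simp [Function.Involutive.toPerm, hinv v]
    · intro v
      have := M.adj_sub (hadj v)
      simpa [Function.Involutive.toPerm] using this
  · rintro ⟨τ, hτ2, hτadj⟩
    have hτs : ∀ v : ↥s, τ (τ v) = v := fun v => by
      have := congrArg (fun σ : Perm ↥s => σ v) hτ2
      simpa using this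
    refine ⟨{ verts := Set.univ
              Adj := fun a b => τ a = b
              adj_sub := by rintro a b rfl; exact hτadj a
              edge_vert := fun _ => Set.mem_univ _
              symm := ⟨by rintro a b rfl; exact (hτs a)⟩ }, ?_⟩
    rw [SimpleGraph.Subgraph.isPerfectMatching_iff]
    intro v
    exact ⟨τ v, rfl, fun w hw => Eq.symm (show τ v = w from hw)⟩

section Main

variable {n k : ℕ} (hk : k ≤ n) (G : SimpleGraph (Fin n))

/-- The complement of the (embedded) set `S` in `Fin n`. -/
def Dset (S : Finset (Fin k)) : Finset (Fin n) :=
  Finset.univ \ S.image (Fin.castLE hk)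

open scoped Classical in
/-- The involutions of `Dset` moving along edges of `G` (fixed-point-free since `G` is
loopless). -/
noncomputable def TT (S : Finset (Fin k)) : Finset (Perm ↥(Dset hk S)) :=
  Finset.univ.filter (fun τ => τ * τ = 1 ∧ ∀ v : ↥(Dset hk S), G.Adj ↑v ↑(τ v))

/-- The monomial exponent associated to an involution. -/
noncomputable def mm (S : Finset (Fin k)) (τ : Perm ↥(Dset hk S)) : Sym2 (Fin n) →₀ ℕ :=
  ∑ v : ↥(Dset hk S), Finsupp.single s(↑v, ↑(τ v)) 1

/-- The matching polynomial of `G - S`. -/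
noncomputable def pp (S : Finset (Fin k)) : MvPolynomial (Sym2 (Fin n)) (GaloisField 2 (k + 2)) :=
  ∑ τ ∈ TT hk G S, ∏ v : ↥(Dset hk S), X s(↑v, ↑(τ v))

lemma pp_eq_monomials (S : Finset (Fin k)) :
    pp hk G S = ∑ τ ∈ TT hk G S, monomial (mm hk S τ) 1 :=
  Finset.sum_congr rfl fun τ _ => prod_X_eq_monomial' _ _

lemma mm_apply_card (S : Finset (Fin k)) (τ : Perm ↥(Dset hk S)) (e : Sym2 (Fin n)) :
    mm hk S τ e = (Finset.univ.filter
      (fun v : ↥(Dset hk S) => s((v : Fin n), (τ v : Fin n)) = e)).card := by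
  classical
  rw [Finset.card_filter, mm, Finsupp.finset_sum_apply]
  exact Finset.sum_congr rfl fun v _ => by rw [Finsupp.single_apply]

lemma mm_apply_le_two (S : Finset (Fin k)) (τ : Perm ↥(Dset hk S)) (e : Sym2 (Fin n)) :
    mm hk S τ e ≤ 2 := by
  classical
  induction e using Sym2.ind with
  | _ a b =>
    rw [mm_apply_card]
    have h1 : (Finset.univ.filter
        (fun v : ↥(Dset hk S) => s((v : Fin n), (τ v : Fin n)) = s(a, b))).card ≤
        ({a, b} : Finset (Fin n)).card := by
      refine Finset.card_le_card_of_injOn (fun v => (v : Fin n)) ?_ ?_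
      · intro v hv
        simp only [Finset.coe_filter, Finset.mem_coe, Finset.mem_filter, Finset.mem_univ, true_and, Set.mem_setOf_eq] at hv
        rcases Sym2.eq_iff.mp hv with ⟨h, _⟩ | ⟨h, _⟩ <;> simp [h]
      · intro u _ w _ h
        exact Subtype.coe_injective h
    refine h1.trans ?_
    refine (Finset.card_insert_le a {b}).trans ?_
    simp

lemma mem_TT {S : Finset (Fin k)} {τ : Perm ↥(Dset hk S)} :
    τ ∈ TT hk G S ↔ τ * τ = 1 ∧ ∀ v : ↥(Dset hk S), G.Adj ↑v ↑(τ v) := by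
  classical
  simp [TT]

lemma TT_involutive {S : Finset (Fin k)} {τ : Perm ↥(Dset hk S)} (hτ : τ ∈ TT hk G S)
    (v : ↥(Dset hk S)) : τ (τ v) = v := by
  have := congrArg (fun σ : Perm ↥(Dset hk S) => σ v) ((mem_TT hk G).mp hτ).1
  simpa using this

lemma mm_injOn {S : Finset (Fin k)} {τ τ' : Perm ↥(Dset hk S)} (hτ : τ ∈ TT hk G S)
    (hτ' : τ' ∈ TT hk G S) (h : mm hk S τ = mm hk S τ') : τ = τ' := by
  classical
  refine Equiv.ext fun v => ?_
  have h1 : 0 < mm hk S τ s((v : Fin n), (τ v : Fin n)) := by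
    rw [mm_apply_card]
    exact Finset.card_pos.mpr ⟨v, by simp⟩
  rw [h, mm_apply_card] at h1
  obtain ⟨w, hw⟩ := Finset.card_pos.mp h1
  simp only [Finset.mem_filter, Finset.mem_univ, true_and] at hw
  rcases Sym2.eq_iff.mp hw with ⟨h1, h2⟩ | ⟨h1, h2⟩
  · have hwv : w = v := Subtype.coe_injective h1
    subst hwv
    exact (Subtype.coe_injective h2).symm
  · have hwv : w = τ v := Subtype.coe_injective h1
    have h3 : τ' w = v := Subtype.coe_injective h2
    subst hwv
    have h4 : τ' (τ' (τ v)) = τ v := TT_involutive hk G hτ' (τ v)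
    rw [h3] at h4
    exact h4.symm

lemma pp_ne_zero {S : Finset (Fin k)} (hS : (TT hk G S).Nonempty) : pp hk G S ≠ 0 := by
  classical
  obtain ⟨τ0, hτ0⟩ := hS
  intro h0
  have hc : coeff (mm hk S τ0) (pp hk G S) = 1 := by
    rw [pp_eq_monomials, coeff_sum, Finset.sum_eq_single τ0]
    · simp [coeff_monomial]
    · intro τ hτ hne
      rw [coeff_monomial, if_neg]
      exact fun h => hne (mm_injOn hk G hτ hτ0 h)
    · intro h; exact absurd hτ0 h
  rw [h0] at hc
  simp at hc

lemma degreeOf_pp_le (S : Finset (Fin k)) (i : Sym2 (Fin n)) :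
    degreeOf i (pp hk G S) ≤ 2 := by
  classical
  rw [MvPolynomial.degreeOf_eq_sup, pp_eq_monomials]
  refine Finset.sup_le fun d hd => ?_
  have hsupp := MvPolynomial.support_sum hd
  rw [Finset.mem_biUnion] at hsupp
  obtain ⟨τ, hτ, hd⟩ := hsupp
  rw [MvPolynomial.support_monomial, if_neg one_ne_zero, Finset.mem_singleton] at hd
  rw [hd]
  exact mm_apply_le_two hk S τ i


open scoped Classical in
/-- The Tutte-type matrix obtained by substituting the values `x` into the adjacency
pattern of `G`. -/
noncomputable def AA (x : Sym2 (Fin n) → GaloisField 2 (k + 2)) :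
    Matrix (Fin n) (Fin n) (GaloisField 2 (k + 2)) :=
  Matrix.of fun u v => if G.Adj u v then x s(u, v) else 0

lemma det_AA (x : Sym2 (Fin n) → GaloisField 2 (k + 2)) (S : Finset (Fin k)) :
    ((AA G x).submatrix (fun v : ↥(Dset hk S) => (v : Fin n))
      (fun v : ↥(Dset hk S) => (v : Fin n))).det = eval x (pp hk G S) := by
  classical
  have h2 : (2 : GaloisField 2 (k + 2)) = 0 := by
    have := CharP.cast_eq_zero (GaloisField 2 (k + 2)) 2
    exact_mod_cast this
  set B : Matrix ↥(Dset hk S) ↥(Dset hk S) (GaloisField 2 (k + 2)) :=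
    (AA G x).submatrix (fun v : ↥(Dset hk S) => (v : Fin n))
      (fun v : ↥(Dset hk S) => (v : Fin n)) with hB
  have hBapp : ∀ i j : ↥(Dset hk S),
      B i j = if G.Adj ↑i ↑j then x s((i : Fin n), (j : Fin n)) else 0 := by
    intro i j
    rw [hB]
    simp only [Matrix.submatrix_apply, AA, Matrix.of_apply]
  have hsym : ∀ i j, B i j = B j i := by
    intro i j
    rw [hBapp, hBapp]
    by_cases hadj : G.Adj (i : Fin n) (j : Fin n)
    · rw [if_pos hadj, if_pos hadj.symm, Sym2.eq_swap]
    · rw [if_neg hadj, if_neg fun h => hadj h.symm]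
  have hfilter : TT hk G S =
      (univ.filter (fun σ : Perm ↥(Dset hk S) => σ * σ = 1)).filter
        (fun τ => ∀ v : ↥(Dset hk S), G.Adj ↑v ↑(τ v)) := by
    ext τ
    rw [Finset.filter_filter]
    rw [mem_TT hk G]
    simp
  calc B.det = ∑ σ ∈ univ.filter (fun σ : Perm ↥(Dset hk S) => σ * σ = 1), ∏ i, B i (σ i) :=
      det_eq_sum_involutions h2 B hsym
  _ = ∑ τ ∈ TT hk G S, ∏ v : ↥(Dset hk S), x s((v : Fin n), (τ v : Fin n)) := by
      rw [← Finset.sum_filter_add_sum_filter_not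
        (univ.filter (fun σ : Perm ↥(Dset hk S) => σ * σ = 1))
        (fun τ => ∀ v : ↥(Dset hk S), G.Adj ↑v ↑(τ v)) (fun σ => ∏ i, B i (σ i))]
      have hbad : ∑ σ ∈ (univ.filter (fun σ : Perm ↥(Dset hk S) => σ * σ = 1)).filter
          (fun τ => ¬ ∀ v : ↥(Dset hk S), G.Adj ↑v ↑(τ v)), ∏ i, B i (σ i) = 0 := by
        refine Finset.sum_eq_zero fun σ hσ => ?_
        simp only [Finset.mem_filter] at hσ
        obtain ⟨v, hv⟩ := not_forall.mp hσ.2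
        refine Finset.prod_eq_zero (Finset.mem_univ v) ?_
        rw [hBapp, if_neg hv]
      rw [hbad, add_zero, ← hfilter]
      refine Finset.sum_congr rfl fun τ hτ => Finset.prod_congr rfl fun v _ => ?_
      rw [hBapp, if_pos (((mem_TT hk G).mp hτ).2 v)]
  _ = eval x (pp hk G S) := by
      rw [pp, map_sum]
      refine Finset.sum_congr rfl fun τ _ => ?_
      rw [map_prod]
      exact Finset.prod_congr rfl fun v _ => (eval_X _).symm

end Main

/-- Let `G` be a graph on `[n]`, let `k ≤ n`, and let `𝔽` be the field with `2^(k+2)`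
elements.  There is a matrix `A' ∈ 𝔽^{n×n}` such that for every `S ⊆ [k]`, the graph
`G − S` has a perfect matching iff the determinant of the principal submatrix of `A'`
indexed by `[n] ∖ S` is nonzero. -/
theorem exists_matrix_det_detects_perfect_matching (n k : ℕ) (hk : k ≤ n)
    (G : SimpleGraph (Fin n)) :
    ∃ A' : Matrix (Fin n) (Fin n) (GaloisField 2 (k + 2)),
      ∀ S : Finset (Fin k),
        HasPerfectMatching (G.induce {v : Fin n | v ∉ S.image (Fin.castLE hk)}) ↔
          (A'.submatrix
              (fun v : ↥(Finset.univ \ S.image (Fin.castLE hk)) => (v : Fin n))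
              (fun v : ↥(Finset.univ \ S.image (Fin.castLE hk)) => (v : Fin n))).det ≠ 0 := by
  classical
  letI : Fintype (GaloisField 2 (k + 2)) := Fintype.ofFinite _
  have hcard : Fintype.card (GaloisField 2 (k + 2)) = 2 ^ (k + 2) := by
    rw [← Nat.card_eq_fintype_card]
    exact GaloisField.card 2 (k + 2) (by omega)
  have hQ0 : (∏ S ∈ Finset.univ.filter (fun S => pp hk G S ≠ 0), pp hk G S) ≠ 0 := by
    rw [Finset.prod_ne_zero_iff]
    intro S hS
    exact (Finset.mem_filter.mp hS).2
  have hQdeg : ∀ i, degreeOf i (∏ S ∈ Finset.univ.filter (fun S => pp hk G S ≠ 0), pp hk G S)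
      ≤ 2 ^ (k + 1) := by
    intro i
    refine (degreeOf_prod_le' i _ _).trans ?_
    calc ∑ S ∈ Finset.univ.filter (fun S => pp hk G S ≠ 0), degreeOf i (pp hk G S)
        ≤ ∑ _S ∈ Finset.univ.filter (fun S => pp hk G S ≠ 0), 2 :=
          Finset.sum_le_sum fun S _ => degreeOf_pp_le hk G S i
    _ = 2 * (Finset.univ.filter (fun S => pp hk G S ≠ 0)).card := by
          rw [Finset.sum_const, smul_eq_mul, mul_comm]
    _ ≤ 2 * 2 ^ k := by
          refine Nat.mul_le_mul_left _ ?_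
          calc (Finset.univ.filter (fun S => pp hk G S ≠ 0)).card
              ≤ (Finset.univ : Finset (Finset (Fin k))).card := Finset.card_filter_le _ _
          _ = 2 ^ k := by rw [Finset.card_univ, Fintype.card_finset, Fintype.card_fin]
    _ = 2 ^ (k + 1) := by ring
  have hmem : (∏ S ∈ Finset.univ.filter (fun S => pp hk G S ≠ 0), pp hk G S) ∈
      MvPolynomial.restrictDegree (Sym2 (Fin n)) (GaloisField 2 (k + 2))
        (Fintype.card (GaloisField 2 (k + 2)) - 1) := by
    rw [MvPolynomial.mem_restrictDegree]
    intro s hs i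
    have h1 : s i ≤ degreeOf i (∏ S ∈ Finset.univ.filter (fun S => pp hk G S ≠ 0), pp hk G S) := by
      rw [MvPolynomial.degreeOf_eq_sup]
      exact Finset.le_sup (f := fun m : Sym2 (Fin n) →₀ ℕ => m i) hs
    refine h1.trans ((hQdeg i).trans ?_)
    rw [hcard]
    have h2 : (1 : ℕ) ≤ 2 ^ (k + 1) := Nat.one_le_two_pow
    have h3 : 2 ^ (k + 2) = 2 * 2 ^ (k + 1) := by ring
    omega
  have hex : ∃ x, eval x (∏ S ∈ Finset.univ.filter (fun S => pp hk G S ≠ 0), pp hk G S) ≠ 0 := by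
    by_contra hcon
    push_neg at hcon
    exact hQ0 (MvPolynomial.eq_zero_of_eval_eq_zero _ _ _ hcon hmem)
  obtain ⟨x, hx⟩ := hex
  have hx' : ∀ S : Finset (Fin k), pp hk G S ≠ 0 → eval x (pp hk G S) ≠ 0 := by
    intro S hS hzero
    apply hx
    rw [map_prod]
    exact Finset.prod_eq_zero (Finset.mem_filter.mpr ⟨Finset.mem_univ S, hS⟩) hzero
  refine ⟨AA G x, fun S => ?_⟩
  have key : (∃ τ : Perm ↥(Dset hk S), τ * τ = 1 ∧ ∀ v : ↥(Dset hk S), G.Adj ↑v ↑(τ v)) ↔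
      ((AA G x).submatrix (fun v : ↥(Dset hk S) => (v : Fin n))
        (fun v : ↥(Dset hk S) => (v : Fin n))).det ≠ 0 := by
    rw [det_AA hk G x S]
    constructor
    · rintro ⟨τ, hτ1, hτ2⟩
      exact hx' S (pp_ne_zero hk G ⟨τ, (mem_TT hk G).mpr ⟨hτ1, hτ2⟩⟩)
    · intro hne
      by_contra hcon
      apply hne
      have hTempty : TT hk G S = ∅ := by
        rw [Finset.eq_empty_iff_forall_notMem]
        intro τ hτ
        obtain ⟨h1, h2⟩ := (mem_TT hk G).mp hτ
        exact hcon ⟨τ, h1, h2⟩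
      rw [pp_eq_monomials, hTempty, Finset.sum_empty, map_zero]
  have hset : {v : Fin n | v ∉ S.image (Fin.castLE hk)} = ↑(Dset hk S) := by
    ext v
    simp [Dset]
  rw [hset, hasPM_iff_involution]
  exact key
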